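/- For z ∈ ℂ let R_z be the bounded linear operator on L²((0,1), ℂ) defined by (R_z f)(x) = ∫_x^1 e^{z(x−s)} f(s) ds. Then the operator norm ‖R_z‖ depends only on Re z, and writing z₁ = Re z: (i) if z₁ > −1, then ‖R_z‖ = sin ν / ν = (z₁² + ν²)^{−1/2}, where ν ∈ (0, π) is the unique solution of −ν cot ν = z₁; (ii) if z₁ = −1, then ‖R_z‖ = 1; (iii) if z₁ < −1, then ‖R_z‖ = sinh η / η = (z₁² − η²)^{−1/2}, where η ∈ (0, +∞) is the unique solution of −η coth η = z₁. -/

import Mathlib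

open MeasureTheory Set

/-- Lebesgue measure restricted to the interval `(0,1)`. -/
noncomputable def mu01 : Measure ℝ := volume.restrict (Set.Ioo 0 1)

/-- `R` is the family of resolvent-type operators
`(R_z f)(x) = ∫_x^1 e^{z(x−s)} f(s) ds` on `L²((0,1), ℂ)`. -/
def IsResolventFamily (R : ℂ → (Lp ℂ 2 mu01 →L[ℂ] Lp ℂ 2 mu01)) : Prop :=
  ∀ z : ℂ, ∀ f : Lp ℂ 2 mu01, ∀ᵐ x ∂mu01,
    (R z f : ℝ → ℂ) x = ∫ s in Set.Ioo x 1, Complex.exp (z * ((x : ℂ) - (s : ℂ))) * f s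

instance : MeasureTheory.IsFiniteMeasure mu01 := by unfold mu01; infer_instance

open scoped ENNReal NNReal
section Helpers

-- a.e. x in mu01 is in Ioo 0 1
lemma ae_mem01 : ∀ᵐ x ∂mu01, x ∈ Set.Ioo (0:ℝ) 1 :=
  ae_restrict_mem measurableSet_Ioo

lemma restrict_Ioi (x : ℝ) (hx : x ∈ Set.Ioo (0:ℝ) 1) :
    mu01.restrict (Set.Ioi x) = volume.restrict (Set.Ioo x 1) := by
  unfold mu01
  rw [Measure.restrict_restrict measurableSet_Ioi]
  congr 1
  ext s
  simp only [Set.mem_inter_iff, Set.mem_Ioi, Set.mem_Ioo]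
  constructor
  · rintro ⟨h1, _, h3⟩; exact ⟨h1, h3⟩
  · rintro ⟨h1, h2⟩; exact ⟨h1, hx.1.trans h1, h2⟩

lemma restrict_Iio (s : ℝ) (hs : s ∈ Set.Ioo (0:ℝ) 1) :
    mu01.restrict (Set.Iio s) = volume.restrict (Set.Ioo 0 s) := by
  unfold mu01
  rw [Measure.restrict_restrict measurableSet_Iio]
  congr 1
  ext x
  simp only [Set.mem_inter_iff, Set.mem_Iio, Set.mem_Ioo]
  constructor
  · rintro ⟨h1, h2, _⟩; exact ⟨h2, h1⟩
  · rintro ⟨h1, h2⟩; exact ⟨h2, h1, h2.trans hs.2⟩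

lemma eLpNorm_two (h : ℝ → ℂ) :
    eLpNorm h 2 mu01 = (∫⁻ x, (‖h x‖₊ : ℝ≥0∞) ^ 2 ∂mu01) ^ (1/2 : ℝ) := by
  rw [eLpNorm_eq_lintegral_rpow_enorm_toReal two_ne_zero ENNReal.ofNat_ne_top]
  simp only [ENNReal.toReal_ofNat]
  congr 1
  refine lintegral_congr fun x => ?_
  rw [← ENNReal.rpow_natCast]
  norm_num
  rfl

lemma Lp_norm_sq (h : Lp ℂ 2 mu01) : ‖h‖ ^ 2 = ∫ x, ‖(h : ℝ → ℂ) x‖ ^ 2 ∂mu01 := by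
  have h2 : RCLike.re (inner ℂ h h) = ‖h‖ ^ 2 := inner_self_eq_norm_sq (𝕜 := ℂ) h
  rw [L2.inner_def] at h2
  rw [← integral_re (L2.integrable_inner h h)] at h2
  rw [← h2]
  congr 1
  ext x
  exact (inner_self_eq_norm_sq (𝕜 := ℂ) ((h : ℝ → ℂ) x))

lemma Ioo_int (h : ℝ → ℝ) (x y : ℝ) (hxy : x ≤ y) :
    ∫ s in Set.Ioo x y, h s = ∫ s in x..y, h s := by
  rw [intervalIntegral.integral_of_le hxy, integral_Ioc_eq_integral_Ioo]

lemma integral_ofRealC {X : Type*} [MeasurableSpace X] {μ : Measure X} (f : X → ℝ) :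
    ∫ x, (f x : ℂ) ∂μ = ((∫ x, f x ∂μ : ℝ) : ℂ) := integral_ofReal

lemma upper_bound (R : ℂ → (Lp ℂ 2 mu01 →L[ℂ] Lp ℂ 2 mu01)) (hR : IsResolventFamily R)
    (z : ℂ) (φ : ℝ → ℝ) (lam : ℝ) (hφc : Continuous φ)
    (hφpos : ∀ s ∈ Set.Ioo (0:ℝ) 1, 0 < φ s) (hlam : 0 < lam)
    (hA : ∀ x ∈ Set.Ioo (0:ℝ) 1,
      ∫ s in Set.Ioo x 1, Real.exp (z.re * (x - s)) * φ s = lam * φ (1 - x))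
    (hB : ∀ s ∈ Set.Ioo (0:ℝ) 1,
      ∫ x in Set.Ioo (0:ℝ) s, Real.exp (z.re * (x - s)) * φ (1 - x) = lam * φ s)
    (f : Lp ℂ 2 mu01) : ‖R z f‖ ≤ lam * ‖f‖ := by
  obtain ⟨g, hgsm, hfg⟩ := Lp.aestronglyMeasurable f
  have hgm : Measurable g := hgsm.measurable
  have hgL2 : MemLp g 2 mu01 := (Lp.memLp f).ae_eq hfg
  have hgint : Integrable g mu01 := hgL2.integrable one_le_two
  set c := z.re with hc
  set E : ℝ → ℝ → ℝ≥0∞ := fun x s => ENNReal.ofReal (Real.exp (c * (x - s))) with hE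
  set N : ℝ → ℝ≥0∞ := fun s => ENNReal.ofReal ‖g s‖ ^ 2 with hN
  set F : ℝ → ℂ := ((R z f : Lp ℂ 2 mu01) : ℝ → ℂ) with hF
  have hmN : Measurable N := (hgm.norm.ennreal_ofReal).pow_const 2
  have hmφ : Measurable fun s : ℝ => ENNReal.ofReal (φ s) := hφc.measurable.ennreal_ofReal
  -- a.e. representation with measurable g
  have hRf : ∀ᵐ x ∂mu01, F x = ∫ s in Set.Ioo x 1, Complex.exp (z * ((x:ℂ) - (s:ℂ))) * g s := by
    filter_upwards [hR z f, ae_mem01] with x hx hx01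
    rw [show F x = _ from hx]
    refine integral_congr_ae ?_
    have h1 : (f : ℝ → ℂ) =ᵐ[volume.restrict (Set.Ioo x 1)] g := by
      rw [← restrict_Ioi x hx01]
      exact ae_restrict_of_ae hfg
    filter_upwards [h1] with s hs
    rw [hs]
  -- key pointwise bound
  have key_ae : ∀ᵐ x ∂mu01, ENNReal.ofReal ‖F x‖ ^ 2 ≤
      ENNReal.ofReal (lam * φ (1 - x)) *
        ∫⁻ s in Set.Ioo x 1, E x s * (N s / ENNReal.ofReal (φ s)) := by
    filter_upwards [hRf, ae_mem01] with x hx hx01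
    have hsub : Set.Ioo x 1 ⊆ Set.Ioo 0 1 := fun s hs => ⟨hx01.1.trans hs.1, hs.2⟩
    have hgr : Integrable (fun s => ‖g s‖) (volume.restrict (Set.Ioo x 1)) := by
      rw [← restrict_Ioi x hx01]
      exact hgint.norm.restrict
    have hexp_bdd : ∀ᵐ s ∂(volume.restrict (Set.Ioo x 1)),
        ‖Real.exp (c * (x - s)) * ‖g s‖‖ ≤ ‖Real.exp |c| * ‖g s‖‖ := by
      filter_upwards [ae_restrict_mem measurableSet_Ioo] with s hs
      have h1 : c * (x - s) ≤ |c| := by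
        calc c * (x - s) ≤ |c * (x - s)| := le_abs_self _
        _ = |c| * |x - s| := abs_mul _ _
        _ ≤ |c| * 1 := by
            refine mul_le_mul_of_nonneg_left ?_ (abs_nonneg c)
            rw [abs_le]
            constructor <;> nlinarith [hx01.1, hx01.2, hs.1, hs.2]
        _ = |c| := mul_one _
      rw [Real.norm_eq_abs, Real.norm_eq_abs, abs_mul, abs_mul,
        abs_of_pos (Real.exp_pos _), abs_of_pos (Real.exp_pos _)]
      exact mul_le_mul_of_nonneg_right (Real.exp_le_exp.2 h1) (abs_nonneg _)
    have hint1 : Integrable (fun s => Real.exp (c * (x - s)) * ‖g s‖)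
        (volume.restrict (Set.Ioo x 1)) := by
      refine Integrable.mono (hgr.const_mul (Real.exp |c|)) ?_ hexp_bdd
      exact ((Real.continuous_exp.comp
        (continuous_const.mul (continuous_const.sub continuous_id))).aestronglyMeasurable).mul
        hgsm.norm.aestronglyMeasurable
    have step1 : ‖F x‖ ≤ ∫ s in Set.Ioo x 1, Real.exp (c * (x - s)) * ‖g s‖ := by
      rw [show F x = _ from hx]
      refine (norm_integral_le_integral_norm _).trans_eq ?_
      refine integral_congr_ae (Filter.Eventually.of_forall fun s => ?_)
      show ‖Complex.exp (z * ((x:ℂ) - (s:ℂ))) * g s‖ = Real.exp (c * (x - s)) * ‖g s‖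
      rw [norm_mul, Complex.norm_exp]
      congr 2
      simp [Complex.mul_re, hc]
    have step2 : ENNReal.ofReal ‖F x‖ ≤ ∫⁻ s in Set.Ioo x 1, E x s * ENNReal.ofReal ‖g s‖ := by
      refine (ENNReal.ofReal_le_ofReal step1).trans ?_
      rw [ofReal_integral_eq_lintegral_ofReal hint1
        (Filter.Eventually.of_forall fun s => by positivity)]
      refine lintegral_mono fun s => ?_
      rw [hE, ENNReal.ofReal_mul (Real.exp_pos _).le]
    have hconj : Real.HolderConjugate 2 2 := Real.HolderConjugate.two_two
    have hmE : Measurable fun s => E x s :=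
      (Real.continuous_exp.comp
        (continuous_const.mul (continuous_const.sub continuous_id))).measurable.ennreal_ofReal
    have hCS := ENNReal.lintegral_mul_le_Lp_mul_Lq (volume.restrict (Set.Ioo x 1)) hconj
      (f := fun s => (E x s * ENNReal.ofReal (φ s)) ^ (1/2 : ℝ))
      (g := fun s => (E x s * (N s / ENNReal.ofReal (φ s))) ^ (1/2 : ℝ))
      ((hmE.mul hmφ).pow_const _).aemeasurable
      ((hmE.mul ((hmN.comp measurable_id).div hmφ)).pow_const _).aemeasurable
    have hLHS : ∫⁻ s in Set.Ioo x 1,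
        ((fun s => (E x s * ENNReal.ofReal (φ s)) ^ (1/2 : ℝ)) *
         (fun s => (E x s * (N s / ENNReal.ofReal (φ s))) ^ (1/2 : ℝ))) s
        = ∫⁻ s in Set.Ioo x 1, E x s * ENNReal.ofReal ‖g s‖ := by
      refine lintegral_congr_ae ?_
      filter_upwards [ae_restrict_mem measurableSet_Ioo] with s hs
      have hφs := hφpos s (hsub hs)
      have hb0 : ENNReal.ofReal (φ s) ≠ 0 := (ENNReal.ofReal_pos.2 hφs).ne'
      have hbt : ENNReal.ofReal (φ s) ≠ ⊤ := ENNReal.ofReal_ne_top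
      show (E x s * ENNReal.ofReal (φ s)) ^ (1/2 : ℝ) *
        (E x s * (N s / ENNReal.ofReal (φ s))) ^ (1/2 : ℝ) = E x s * ENNReal.ofReal ‖g s‖
      rw [← ENNReal.mul_rpow_of_nonneg _ _ (by norm_num : (0:ℝ) ≤ 1/2)]
      have h2 : E x s * ENNReal.ofReal (φ s) * (E x s * (N s / ENNReal.ofReal (φ s)))
          = (E x s * ENNReal.ofReal ‖g s‖) ^ (2:ℕ) := by
        rw [mul_mul_mul_comm, ENNReal.mul_div_cancel' (fun h => absurd h hb0) (fun h => absurd h hbt), hN]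
        ring
      rw [h2, ← ENNReal.rpow_natCast (E x s * ENNReal.ofReal ‖g s‖) 2, ← ENNReal.rpow_mul]
      norm_num
    have hint2 : Integrable (fun s => Real.exp (c * (x - s)) * φ s)
        (volume.restrict (Set.Ioo x 1)) := by
      have : Continuous fun s => Real.exp (c * (x - s)) * φ s :=
        (Real.continuous_exp.comp
          (continuous_const.mul (continuous_const.sub continuous_id))).mul hφc
      exact (this.integrableOn_Icc).mono_set Set.Ioo_subset_Icc_self
    have hR1 : ∫⁻ s in Set.Ioo x 1, E x s * ENNReal.ofReal (φ s)
        = ENNReal.ofReal (lam * φ (1 - x)) := by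
      have e1 : ∫⁻ s in Set.Ioo x 1, E x s * ENNReal.ofReal (φ s)
          = ∫⁻ s in Set.Ioo x 1, ENNReal.ofReal (Real.exp (c * (x - s)) * φ s) :=
        lintegral_congr fun s => by rw [hE, ENNReal.ofReal_mul (Real.exp_pos _).le]
      rw [e1, ← ofReal_integral_eq_lintegral_ofReal hint2 ?_, hA x hx01]
      filter_upwards [ae_restrict_mem measurableSet_Ioo] with s hs
      have := hφpos s (hsub hs)
      positivity
    have main1 : ENNReal.ofReal ‖F x‖ ≤
        ENNReal.ofReal (lam * φ (1 - x)) ^ (1/2:ℝ) *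
        (∫⁻ s in Set.Ioo x 1, E x s * (N s / ENNReal.ofReal (φ s))) ^ (1/2:ℝ) := by
      refine step2.trans ?_
      rw [← hLHS]
      refine hCS.trans ?_
      have e2 : ∫⁻ s in Set.Ioo x 1, ((E x s * ENNReal.ofReal (φ s)) ^ (1/2:ℝ)) ^ (2:ℝ)
          = ∫⁻ s in Set.Ioo x 1, E x s * ENNReal.ofReal (φ s) :=
        lintegral_congr fun s => by rw [← ENNReal.rpow_mul]; norm_num
      have e3 : ∫⁻ s in Set.Ioo x 1, ((E x s * (N s / ENNReal.ofReal (φ s))) ^ (1/2:ℝ)) ^ (2:ℝ)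
          = ∫⁻ s in Set.Ioo x 1, E x s * (N s / ENNReal.ofReal (φ s)) :=
        lintegral_congr fun s => by rw [← ENNReal.rpow_mul]; norm_num
      rw [e2, e3, hR1]
    calc ENNReal.ofReal ‖F x‖ ^ 2
        ≤ (ENNReal.ofReal (lam * φ (1 - x)) ^ (1/2:ℝ) *
           (∫⁻ s in Set.Ioo x 1, E x s * (N s / ENNReal.ofReal (φ s))) ^ (1/2:ℝ)) ^ 2 :=
          pow_le_pow_left' main1 2
      _ = ENNReal.ofReal (lam * φ (1 - x)) *
          ∫⁻ s in Set.Ioo x 1, E x s * (N s / ENNReal.ofReal (φ s)) := by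
          rw [mul_pow, ← ENNReal.rpow_natCast (_ ^ (1/2:ℝ)) 2,
            ← ENNReal.rpow_natCast (_ ^ (1/2:ℝ)) 2, ← ENNReal.rpow_mul, ← ENNReal.rpow_mul]
          norm_num
  -- the product function
  set Φ : ℝ → ℝ → ℝ≥0∞ := fun x s =>
    ({p : ℝ × ℝ | p.1 < p.2}.indicator
      (fun p => ENNReal.ofReal (lam * φ (1 - p.1)) *
        (E p.1 p.2 * (N p.2 / ENNReal.ofReal (φ p.2)))) (x, s)) with hΦ
  have hΦmeas : AEMeasurable (Function.uncurry Φ) (mu01.prod mu01) := by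
    apply Measurable.aemeasurable
    have huncurry : Function.uncurry Φ =
        ({p : ℝ × ℝ | p.1 < p.2}.indicator
          (fun p => ENNReal.ofReal (lam * φ (1 - p.1)) *
            (E p.1 p.2 * (N p.2 / ENNReal.ofReal (φ p.2))))) := by
      ext p
      simp [Function.uncurry, hΦ]
    rw [huncurry]
    refine Measurable.indicator ?_ (measurableSet_lt measurable_fst measurable_snd)
    refine Measurable.mul ?_ (Measurable.mul ?_ ?_)
    · exact (continuous_const.mul
        (hφc.comp (continuous_const.sub continuous_fst))).measurable.ennreal_ofReal
    · exact (Real.continuous_exp.comp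
        (continuous_const.mul (continuous_fst.sub continuous_snd))).measurable.ennreal_ofReal
    · exact (hmN.comp measurable_snd).div (hmφ.comp measurable_snd)
  have hΦx : ∀ x ∈ Set.Ioo (0:ℝ) 1, ∫⁻ s, Φ x s ∂mu01 =
      ENNReal.ofReal (lam * φ (1 - x)) *
        ∫⁻ s in Set.Ioo x 1, E x s * (N s / ENNReal.ofReal (φ s)) := by
    intro x hx01
    have heq : ∀ s, Φ x s = (Set.Ioi x).indicator
        (fun s => ENNReal.ofReal (lam * φ (1 - x)) *
          (E x s * (N s / ENNReal.ofReal (φ s)))) s := by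
      intro s
      simp only [hΦ, Set.indicator_apply, Set.mem_setOf_eq, Set.mem_Ioi]
    simp_rw [heq]
    rw [lintegral_indicator measurableSet_Ioi, restrict_Ioi x hx01]
    have hm1 : Measurable fun s => E x s * (N s / ENNReal.ofReal (φ s)) :=
      ((Real.continuous_exp.comp
        (continuous_const.mul (continuous_const.sub continuous_id))).measurable.ennreal_ofReal :
        Measurable fun s : ℝ => ENNReal.ofReal (Real.exp (c * (x - s)))).mul (hmN.div hmφ)
    exact lintegral_const_mul _ hm1
  have hΦs : ∀ s ∈ Set.Ioo (0:ℝ) 1, ∫⁻ x, Φ x s ∂mu01 = ENNReal.ofReal lam ^ 2 * N s := by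
    intro s hs01
    have heq : ∀ x, Φ x s = (Set.Iio s).indicator
        (fun x => (ENNReal.ofReal lam * (N s / ENNReal.ofReal (φ s))) *
          (E x s * ENNReal.ofReal (φ (1 - x)))) x := by
      intro x
      simp only [hΦ, Set.indicator_apply, Set.mem_setOf_eq, Set.mem_Iio]
      split_ifs with h
      · rw [ENNReal.ofReal_mul hlam.le]
        ring
      · rfl
    simp_rw [heq]
    have hm2 : Measurable fun x => E x s * ENNReal.ofReal (φ (1 - x)) :=
      ((Real.continuous_exp.comp
        (continuous_const.mul (continuous_id.sub continuous_const))).measurable.ennreal_ofReal :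
        Measurable fun x : ℝ => ENNReal.ofReal (Real.exp (c * (x - s)))).mul
        ((hφc.comp (continuous_const.sub continuous_id)).measurable.ennreal_ofReal :
          Measurable fun x : ℝ => ENNReal.ofReal (φ (1 - x)))
    rw [lintegral_indicator measurableSet_Iio, restrict_Iio s hs01,
      lintegral_const_mul _ hm2]
    have hint3 : Integrable (fun x => Real.exp (c * (x - s)) * φ (1 - x))
        (volume.restrict (Set.Ioo 0 s)) := by
      have hcont : Continuous fun x => Real.exp (c * (x - s)) * φ (1 - x) :=
        (Real.continuous_exp.comp
          (continuous_const.mul (continuous_id.sub continuous_const))).mul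
          (hφc.comp (continuous_const.sub continuous_id))
      exact (hcont.integrableOn_Icc).mono_set Set.Ioo_subset_Icc_self
    have hB' : ∫⁻ x in Set.Ioo (0:ℝ) s, E x s * ENNReal.ofReal (φ (1 - x))
        = ENNReal.ofReal (lam * φ s) := by
      have e1 : ∫⁻ x in Set.Ioo (0:ℝ) s, E x s * ENNReal.ofReal (φ (1 - x))
          = ∫⁻ x in Set.Ioo (0:ℝ) s, ENNReal.ofReal (Real.exp (c * (x - s)) * φ (1 - x)) :=
        lintegral_congr fun x => by rw [hE, ENNReal.ofReal_mul (Real.exp_pos _).le]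
      rw [e1, ← ofReal_integral_eq_lintegral_ofReal hint3 ?_, hB s hs01]
      filter_upwards [ae_restrict_mem measurableSet_Ioo] with x hx
      have h1x : (1 - x) ∈ Set.Ioo (0:ℝ) 1 := ⟨by linarith [hx.2, hs01.2], by linarith [hx.1]⟩
      have := hφpos _ h1x
      positivity
    rw [hB', ENNReal.ofReal_mul hlam.le]
    have hb0 : ENNReal.ofReal (φ s) ≠ 0 := (ENNReal.ofReal_pos.2 (hφpos s hs01)).ne'
    rw [mul_mul_mul_comm, ENNReal.div_mul_cancel hb0 ENNReal.ofReal_ne_top, sq]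
  -- main estimate
  have hmain : ∫⁻ x, (‖F x‖₊ : ℝ≥0∞) ^ 2 ∂mu01 ≤
      ENNReal.ofReal lam ^ 2 * ∫⁻ s, (‖(f : ℝ → ℂ) s‖₊ : ℝ≥0∞) ^ 2 ∂mu01 := by
    have h1 : ∫⁻ x, (‖F x‖₊ : ℝ≥0∞) ^ 2 ∂mu01 = ∫⁻ x, ENNReal.ofReal ‖F x‖ ^ 2 ∂mu01 := by
      simp_rw [ofReal_norm, enorm_eq_nnnorm]
    rw [h1]
    calc ∫⁻ x, ENNReal.ofReal ‖F x‖ ^ 2 ∂mu01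
        ≤ ∫⁻ x, (ENNReal.ofReal (lam * φ (1 - x)) *
            ∫⁻ s in Set.Ioo x 1, E x s * (N s / ENNReal.ofReal (φ s))) ∂mu01 :=
          lintegral_mono_ae key_ae
      _ = ∫⁻ x, ∫⁻ s, Φ x s ∂mu01 ∂mu01 := by
          refine lintegral_congr_ae ?_
          filter_upwards [ae_mem01] with x hx
          exact (hΦx x hx).symm
      _ = ∫⁻ s, ∫⁻ x, Φ x s ∂mu01 ∂mu01 := lintegral_lintegral_swap hΦmeas
      _ = ∫⁻ s, ENNReal.ofReal lam ^ 2 * N s ∂mu01 := by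
          refine lintegral_congr_ae ?_
          filter_upwards [ae_mem01] with s hs
          exact hΦs s hs
      _ = ENNReal.ofReal lam ^ 2 * ∫⁻ s, N s ∂mu01 := lintegral_const_mul _ hmN
      _ = ENNReal.ofReal lam ^ 2 * ∫⁻ s, (‖(f : ℝ → ℂ) s‖₊ : ℝ≥0∞) ^ 2 ∂mu01 := by
          congr 1
          refine lintegral_congr_ae ?_
          filter_upwards [hfg] with s hs
          simp only [hN, hs]
          rw [ofReal_norm, enorm_eq_nnnorm]
  -- conclude
  have hfin : eLpNorm F 2 mu01 ≤ ENNReal.ofReal lam * eLpNorm ((f : ℝ → ℂ)) 2 mu01 := by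
    rw [eLpNorm_two, eLpNorm_two]
    calc (∫⁻ x, (‖F x‖₊ : ℝ≥0∞) ^ 2 ∂mu01) ^ (1/2:ℝ)
        ≤ (ENNReal.ofReal lam ^ 2 * ∫⁻ s, (‖(f : ℝ → ℂ) s‖₊ : ℝ≥0∞) ^ 2 ∂mu01) ^ (1/2:ℝ) :=
          ENNReal.rpow_le_rpow hmain (by norm_num)
      _ = ENNReal.ofReal lam * (∫⁻ s, (‖(f : ℝ → ℂ) s‖₊ : ℝ≥0∞) ^ 2 ∂mu01) ^ (1/2:ℝ) := by
          rw [ENNReal.mul_rpow_of_nonneg _ _ (by norm_num : (0:ℝ) ≤ 1/2)]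
          congr 1
          rw [← ENNReal.rpow_natCast (ENNReal.ofReal lam) 2, ← ENNReal.rpow_mul]
          norm_num
  have hne : ENNReal.ofReal lam * eLpNorm ((f : ℝ → ℂ)) 2 mu01 ≠ ⊤ :=
    ENNReal.mul_ne_top ENNReal.ofReal_ne_top (Lp.eLpNorm_ne_top f)
  have h2 := ENNReal.toReal_mono hne hfin
  rw [ENNReal.toReal_mul, ENNReal.toReal_ofReal hlam.le] at h2
  rw [Lp.norm_def, Lp.norm_def]
  exact h2

lemma integral_mu01 (h : ℝ → ℝ) : ∫ x, h x ∂mu01 = ∫ x in Set.Ioo (0:ℝ) 1, h x := rfl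

lemma flip_int_sq (φ : ℝ → ℝ) :
    ∫ x in Set.Ioo (0:ℝ) 1, φ (1-x) ^ 2 = ∫ s in Set.Ioo (0:ℝ) 1, φ s ^ 2 := by
  rw [Ioo_int _ 0 1 zero_le_one, Ioo_int _ 0 1 zero_le_one]
  have := intervalIntegral.integral_comp_sub_left (fun u => φ u ^ 2) 1 (a := 0) (b := 1)
  simpa using this

lemma lower_bound (R : ℂ → (Lp ℂ 2 mu01 →L[ℂ] Lp ℂ 2 mu01)) (hR : IsResolventFamily R)
    (z : ℂ) (φ : ℝ → ℝ) (lam : ℝ) (hφc : Continuous φ)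
    (hφpos : ∀ s ∈ Set.Ioo (0:ℝ) 1, 0 < φ s) (hlam : 0 < lam)
    (hA : ∀ x ∈ Set.Ioo (0:ℝ) 1,
      ∫ s in Set.Ioo x 1, Real.exp (z.re * (x - s)) * φ s = lam * φ (1 - x)) :
    lam ≤ ‖R z‖ := by
  set f₀ : ℝ → ℂ := fun s => Complex.exp ((z.im * s : ℝ) * Complex.I) * (φ s : ℂ) with hf₀
  have hf₀c : Continuous f₀ := by
    apply Continuous.mul
    · exact Complex.continuous_exp.comp
        ((Complex.continuous_ofReal.comp (continuous_const.mul continuous_id)).mul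
          continuous_const)
    · exact Complex.continuous_ofReal.comp hφc
  have hnorm : ∀ s, ‖f₀ s‖ = |φ s| := by
    intro s
    simp [hf₀, Complex.norm_exp]
  obtain ⟨C, hC⟩ := (isCompact_Icc (a := (0:ℝ)) (b := 1)).exists_bound_of_continuousOn
    hφc.continuousOn
  have hmem : MemLp f₀ 2 mu01 := by
    refine MemLp.of_bound hf₀c.aestronglyMeasurable C ?_
    filter_upwards [ae_mem01] with s hs
    rw [hnorm, ← Real.norm_eq_abs]
    exact hC s (Set.Ioo_subset_Icc_self hs)
  set f : Lp ℂ 2 mu01 := hmem.toLp f₀ with hfdef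
  have hcoe : (f : ℝ → ℂ) =ᵐ[mu01] f₀ := hmem.coeFn_toLp
  have hnf : ‖f‖ ^ 2 = ∫ s in Set.Ioo (0:ℝ) 1, φ s ^ 2 := by
    rw [Lp_norm_sq, ← integral_mu01]
    refine integral_congr_ae ?_
    filter_upwards [hcoe] with s hs
    rw [hs, hnorm, sq_abs]
  have hnf_pos : 0 < ∫ s in Set.Ioo (0:ℝ) 1, φ s ^ 2 := by
    rw [Ioo_int _ 0 1 zero_le_one]
    refine intervalIntegral.intervalIntegral_pos_of_pos_on
      ((hφc.pow 2).intervalIntegrable 0 1) (fun x hx => pow_pos (hφpos x hx) 2) zero_lt_one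
  have hRf : (↑↑(R z f) : ℝ → ℂ) =ᵐ[mu01]
      fun x => Complex.exp ((z.im * x : ℝ) * Complex.I) * ((lam * φ (1-x) : ℝ) : ℂ) := by
    filter_upwards [hR z f, ae_mem01] with x hx hx01
    rw [hx]
    have h1 : ∫ s in Set.Ioo x 1, Complex.exp (z * (↑x - ↑s)) * (f : ℝ → ℂ) s
        = ∫ s in Set.Ioo x 1, Complex.exp (z * (↑x - ↑s)) * f₀ s := by
      refine integral_congr_ae ?_
      have h2 : (f : ℝ → ℂ) =ᵐ[volume.restrict (Set.Ioo x 1)] f₀ := by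
        rw [← restrict_Ioi x hx01]
        exact ae_restrict_of_ae hcoe
      filter_upwards [h2] with s hs
      rw [hs]
    rw [h1]
    have h3 : ∀ s : ℝ, Complex.exp (z * (↑x - ↑s)) * f₀ s
        = Complex.exp ((z.im * x : ℝ) * Complex.I) *
          ((Real.exp (z.re * (x - s)) * φ s : ℝ) : ℂ) := by
      intro s
      have hz : z * ((x:ℂ) - (s:ℂ)) + ((z.im * s : ℝ) : ℂ) * Complex.I
          = ((z.re * (x - s) : ℝ) : ℂ) + ((z.im * x : ℝ) : ℂ) * Complex.I := by
        rw [Complex.ext_iff]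
        constructor <;>
          simp [Complex.mul_re, Complex.mul_im, Complex.add_re, Complex.add_im,
            Complex.sub_re, Complex.sub_im] <;> ring
      calc Complex.exp (z * (↑x - ↑s)) * f₀ s
          = Complex.exp (z * (↑x - ↑s) + ((z.im * s : ℝ) : ℂ) * Complex.I) * (φ s : ℂ) := by
            rw [Complex.exp_add]; rw [hf₀]; ring
        _ = Complex.exp ((z.im * x : ℝ) * Complex.I) *
            ((Real.exp (z.re * (x - s)) * φ s : ℝ) : ℂ) := by
            rw [hz, Complex.exp_add, Complex.ofReal_mul (Real.exp (z.re * (x - s))) (φ s),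
              Complex.ofReal_exp]
            ring
    rw [integral_congr_ae (Filter.Eventually.of_forall h3), integral_const_mul,
      integral_ofRealC, hA x hx01]
  have hnRf : ‖R z f‖ ^ 2 = lam ^ 2 * ∫ s in Set.Ioo (0:ℝ) 1, φ s ^ 2 := by
    rw [Lp_norm_sq]
    have h4 : ∫ x, ‖(↑↑(R z f) : ℝ → ℂ) x‖ ^ 2 ∂mu01
        = ∫ x, (lam * φ (1 - x)) ^ 2 ∂mu01 := by
      refine integral_congr_ae ?_
      filter_upwards [hRf] with x hx
      rw [hx]
      simp [Complex.norm_exp, sq_abs, mul_pow]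
    rw [h4, integral_mu01]
    simp_rw [mul_pow]
    rw [integral_const_mul]
    congr 1
    exact flip_int_sq φ
  have hnf' : ‖f‖ = Real.sqrt (∫ s in Set.Ioo (0:ℝ) 1, φ s ^ 2) := by
    rw [← hnf, Real.sqrt_sq (norm_nonneg f)]
  have hfpos : 0 < ‖f‖ := by
    rw [hnf']
    exact Real.sqrt_pos.2 hnf_pos
  have hRfval : ‖R z f‖ = lam * ‖f‖ := by
    have h2 : ‖R z f‖ ^ 2 = (lam * ‖f‖) ^ 2 := by
      rw [hnRf, mul_pow, hnf]
    have h3 := congrArg Real.sqrt h2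
    rwa [Real.sqrt_sq (norm_nonneg _), Real.sqrt_sq (by positivity)] at h3
  calc lam = ‖R z f‖ / ‖f‖ := by
        rw [hRfval]
        field_simp
    _ ≤ ‖R z‖ := ContinuousLinearMap.ratio_le_opNorm (R z) f

lemma hB_of_hA (c : ℝ) (φ : ℝ → ℝ) (lam : ℝ)
    (hA : ∀ x ∈ Set.Ioo (0:ℝ) 1,
      ∫ s in x..1, Real.exp (c * (x - s)) * φ s = lam * φ (1 - x)) :
    ∀ s ∈ Set.Ioo (0:ℝ) 1,
      ∫ x in (0:ℝ)..s, Real.exp (c * (x - s)) * φ (1 - x) = lam * φ s := by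
  intro s hs
  have h1 : ∫ x in (0:ℝ)..s, (fun u => Real.exp (c * ((1 - s) - u)) * φ u) (1 - x)
      = ∫ u in (1 - s)..1, Real.exp (c * ((1 - s) - u)) * φ u := by
    simpa using intervalIntegral.integral_comp_sub_left
      (fun u => Real.exp (c * ((1 - s) - u)) * φ u) 1 (a := 0) (b := s)
  have h2 : ∀ x : ℝ, (fun u => Real.exp (c * ((1 - s) - u)) * φ u) (1 - x)
      = Real.exp (c * (x - s)) * φ (1 - x) := by
    intro x
    simp only []
    rw [show (1 - s) - (1 - x) = x - s by ring]
  have h3 : (1 - s) ∈ Set.Ioo (0:ℝ) 1 := ⟨by linarith [hs.2], by linarith [hs.1]⟩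
  calc ∫ x in (0:ℝ)..s, Real.exp (c * (x - s)) * φ (1 - x)
      = ∫ x in (0:ℝ)..s, (fun u => Real.exp (c * ((1 - s) - u)) * φ u) (1 - x) := by
        refine intervalIntegral.integral_congr fun x _ => ?_
        rw [h2]
    _ = ∫ u in (1 - s)..1, Real.exp (c * ((1 - s) - u)) * φ u := h1
    _ = lam * φ (1 - (1 - s)) := hA (1 - s) h3
    _ = lam * φ s := by rw [show (1:ℝ) - (1 - s) = s by ring]

lemma A_trig (c ν : ℝ) (hν0 : 0 < ν) (hrel : c * Real.sin ν = -(ν * Real.cos ν)) (x : ℝ) :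
    ∫ s in x..1, Real.exp (c * (x - s)) * Real.sin (ν * s)
      = (Real.sin ν / ν) * Real.sin (ν * (1 - x)) := by
  have hsq : c ^ 2 + ν ^ 2 ≠ 0 := by positivity
  have hderiv : ∀ s ∈ Set.uIcc x 1, HasDerivAt
      (fun s => Real.exp (c * (x - s)) * ((-c) * Real.sin (ν * s) - ν * Real.cos (ν * s))
        / (c ^ 2 + ν ^ 2))
      (Real.exp (c * (x - s)) * Real.sin (ν * s)) s := by
    intro s _
    have h1 : HasDerivAt (fun s : ℝ => c * (x - s)) (-c) s := by
      simpa using ((hasDerivAt_id s).const_sub x).const_mul c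
    have h2 := h1.exp
    have h3 : HasDerivAt (fun s : ℝ => ν * s) ν s := by
      simpa using (hasDerivAt_id s).const_mul ν
    have h6 := ((h3.sin).const_mul (-c)).sub ((h3.cos).const_mul ν)
    have h7 := (h2.mul h6).div_const (c ^ 2 + ν ^ 2)
    refine h7.congr_deriv ?_
    simp only [Pi.sub_apply]
    field_simp
    ring
  have hint : IntervalIntegrable (fun s => Real.exp (c * (x - s)) * Real.sin (ν * s))
      volume x 1 :=
    ((Real.continuous_exp.comp (continuous_const.mul (continuous_const.sub continuous_id))).mul
      (Real.continuous_sin.comp (continuous_const.mul continuous_id))).intervalIntegrable x 1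
  rw [intervalIntegral.integral_eq_sub_of_hasDerivAt hderiv hint]
  have h0 : (-c) * Real.sin (ν * 1) - ν * Real.cos (ν * 1) = 0 := by
    rw [mul_one]; linarith [hrel]
  rw [h0]
  simp only [mul_zero, zero_div, sub_self, Real.exp_zero, one_mul]
  rw [show ν * (1 - x) = ν - ν * x by ring, Real.sin_sub]
  have hpyth := Real.sin_sq_add_cos_sq ν
  field_simp
  linear_combination (((Real.sin (ν*x)) * (c * Real.cos ν + ν * Real.sin ν)
      - (Real.cos (ν*x)) * (c * Real.sin ν - ν * Real.cos ν)) ) * hrel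
    + ((-(Real.cos (ν*x) * ν^2)) - Real.sin (ν*x) * ν * c) * hpyth

lemma A_hyp (c η : ℝ) (hη0 : 0 < η) (hlt : η < -c)
    (hrel : c * Real.sinh η = -(η * Real.cosh η)) (x : ℝ) :
    ∫ s in x..1, Real.exp (c * (x - s)) * Real.sinh (η * s)
      = (Real.sinh η / η) * Real.sinh (η * (1 - x)) := by
  have hsq : c ^ 2 - η ^ 2 ≠ 0 := by nlinarith
  have hderiv : ∀ s ∈ Set.uIcc x 1, HasDerivAt
      (fun s => Real.exp (c * (x - s)) * ((-c) * Real.sinh (η * s) - η * Real.cosh (η * s))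
        / (c ^ 2 - η ^ 2))
      (Real.exp (c * (x - s)) * Real.sinh (η * s)) s := by
    intro s _
    have h1 : HasDerivAt (fun s : ℝ => c * (x - s)) (-c) s := by
      simpa using ((hasDerivAt_id s).const_sub x).const_mul c
    have h2 := h1.exp
    have h3 : HasDerivAt (fun s : ℝ => η * s) η s := by
      simpa using (hasDerivAt_id s).const_mul η
    have h6 := ((h3.sinh).const_mul (-c)).sub ((h3.cosh).const_mul η)
    have h7 := (h2.mul h6).div_const (c ^ 2 - η ^ 2)
    refine h7.congr_deriv ?_
    simp only [Pi.sub_apply]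
    field_simp
    ring
  have hint : IntervalIntegrable (fun s => Real.exp (c * (x - s)) * Real.sinh (η * s))
      volume x 1 :=
    ((Real.continuous_exp.comp (continuous_const.mul (continuous_const.sub continuous_id))).mul
      (Real.continuous_sinh.comp (continuous_const.mul continuous_id))).intervalIntegrable x 1
  rw [intervalIntegral.integral_eq_sub_of_hasDerivAt hderiv hint]
  have h0 : (-c) * Real.sinh (η * 1) - η * Real.cosh (η * 1) = 0 := by
    rw [mul_one]; linarith [hrel]
  rw [h0]
  simp only [mul_zero, zero_div, sub_self, Real.exp_zero, one_mul]
  rw [show η * (1 - x) = η - η * x by ring, Real.sinh_sub]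
  have hpyth := Real.cosh_sq_sub_sinh_sq η
  field_simp
  linear_combination (((Real.sinh (η*x)) * (c * Real.cosh η + η * Real.sinh η)
      - (Real.cosh (η*x)) * (c * Real.sinh η - η * Real.cosh η))
      - 2*η*Real.sinh (η*x)*Real.sinh η) * hrel
    + ((Real.cosh (η*x) * η^2) + Real.sinh (η*x) * η * c
      - 2*η*c*Real.sinh (η*x) - 2*η^2*Real.cosh (η*x)) * hpyth

lemma A_one (x : ℝ) :
    ∫ s in x..1, Real.exp ((-1 : ℝ) * (x - s)) * s = 1 * (1 - x) := by
  have hderiv : ∀ s ∈ Set.uIcc x 1, HasDerivAt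
      (fun s => Real.exp ((-1 : ℝ) * (x - s)) * (s - 1))
      (Real.exp ((-1 : ℝ) * (x - s)) * s) s := by
    intro s _
    have h1 : HasDerivAt (fun s : ℝ => (-1 : ℝ) * (x - s)) 1 s := by
      simpa using ((hasDerivAt_id s).const_sub x).const_mul (-1 : ℝ)
    have h2 := h1.exp
    have h6 : HasDerivAt (fun s : ℝ => s - 1) 1 s := (hasDerivAt_id s).sub_const 1
    have h7 := h2.mul h6
    refine h7.congr_deriv ?_
    ring
  have hint : IntervalIntegrable (fun s => Real.exp ((-1 : ℝ) * (x - s)) * s)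
      volume x 1 :=
    ((Real.continuous_exp.comp (continuous_const.mul (continuous_const.sub continuous_id))).mul
      continuous_id).intervalIntegrable x 1
  rw [intervalIntegral.integral_eq_sub_of_hasDerivAt hderiv hint]
  simp [sub_self, Real.exp_zero]

lemma norm_eq_lam (R : ℂ → (Lp ℂ 2 mu01 →L[ℂ] Lp ℂ 2 mu01)) (hR : IsResolventFamily R)
    (z : ℂ) (φ : ℝ → ℝ) (lam : ℝ)
    (hφc : Continuous φ) (hφpos : ∀ s ∈ Set.Ioo (0:ℝ) 1, 0 < φ s) (hlam : 0 < lam)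
    (hA' : ∀ x ∈ Set.Ioo (0:ℝ) 1,
      ∫ s in x..1, Real.exp (z.re * (x - s)) * φ s = lam * φ (1 - x)) :
    ‖R z‖ = lam := by
  have hA : ∀ x ∈ Set.Ioo (0:ℝ) 1,
      ∫ s in Set.Ioo x 1, Real.exp (z.re * (x - s)) * φ s = lam * φ (1 - x) := by
    intro x hx
    rw [Ioo_int _ _ _ hx.2.le]
    exact hA' x hx
  have hB' := hB_of_hA z.re φ lam hA'
  have hB : ∀ s ∈ Set.Ioo (0:ℝ) 1,
      ∫ x in Set.Ioo (0:ℝ) s, Real.exp (z.re * (x - s)) * φ (1 - x) = lam * φ s := by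
    intro s hs
    rw [Ioo_int _ _ _ hs.1.le]
    exact hB' s hs
  refine le_antisymm ?_ (lower_bound R hR z φ lam hφc hφpos hlam hA)
  exact ContinuousLinearMap.opNorm_le_bound _ hlam.le
    (upper_bound R hR z φ lam hφc hφpos hlam hA hB)

lemma norm_trig (R : ℂ → (Lp ℂ 2 mu01 →L[ℂ] Lp ℂ 2 mu01)) (hR : IsResolventFamily R)
    (z : ℂ) (ν : ℝ) (hν : ν ∈ Set.Ioo 0 Real.pi)
    (hrel : z.re * Real.sin ν = -(ν * Real.cos ν)) : ‖R z‖ = Real.sin ν / ν := by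
  have hsν : 0 < Real.sin ν := Real.sin_pos_of_pos_of_lt_pi hν.1 hν.2
  refine norm_eq_lam R hR z (fun s => Real.sin (ν * s)) _
    (Real.continuous_sin.comp (continuous_const.mul continuous_id)) ?_ (div_pos hsν hν.1) ?_
  · intro s hs
    refine Real.sin_pos_of_pos_of_lt_pi (mul_pos hν.1 hs.1) ?_
    nlinarith [hν.1, hν.2, hs.1, hs.2]
  · intro x _
    exact A_trig z.re ν hν.1 hrel x

lemma norm_one_case (R : ℂ → (Lp ℂ 2 mu01 →L[ℂ] Lp ℂ 2 mu01)) (hR : IsResolventFamily R)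
    (z : ℂ) (hz : z.re = -1) : ‖R z‖ = 1 := by
  refine norm_eq_lam R hR z (fun s => s) 1 continuous_id (fun s hs => hs.1) one_pos ?_
  intro x _
  rw [hz]
  exact A_one x

lemma norm_hyp (R : ℂ → (Lp ℂ 2 mu01 →L[ℂ] Lp ℂ 2 mu01)) (hR : IsResolventFamily R)
    (z : ℂ) (η : ℝ) (hη0 : 0 < η)
    (hrel : z.re * Real.sinh η = -(η * Real.cosh η)) : ‖R z‖ = Real.sinh η / η := by
  have hsh : 0 < Real.sinh η := by positivity
  have hlt : η < -z.re := by nlinarith [Real.sinh_lt_cosh η]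
  refine norm_eq_lam R hR z (fun s => Real.sinh (η * s)) _
    (Real.continuous_sinh.comp (continuous_const.mul continuous_id)) ?_ (div_pos hsh hη0) ?_
  · intro s hs
    have : 0 < η * s := mul_pos hη0 hs.1
    positivity
  · intro x _
    exact A_hyp z.re η hη0 hlt hrel x

lemma exists_nu (c : ℝ) (hc : -1 < c) :
    ∃ ν ∈ Set.Ioo (0:ℝ) Real.pi, c * Real.sin ν = -(ν * Real.cos ν) := by
  set g : ℝ → ℝ := fun ν => ν * Real.cos ν + c * Real.sin ν with hg
  have hgcont : Continuous g :=
    (continuous_id.mul Real.continuous_cos).add (continuous_const.mul Real.continuous_sin)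
  set a : ℝ := min (Real.sqrt (1 + c)) 1 with ha
  have ha0 : 0 < a := lt_min (Real.sqrt_pos.2 (by linarith)) zero_lt_one
  have ha1 : a ≤ 1 := min_le_right _ _
  have haπ : a < Real.pi := lt_of_le_of_lt ha1 (by linarith [Real.pi_gt_three])
  have hga : 0 < g a := by
    have hsa : 0 < Real.sin a := Real.sin_pos_of_pos_of_lt_pi ha0 haπ
    rcases le_or_gt 0 c with h | h
    · have hca : 0 < Real.cos a := Real.cos_pos_of_mem_Ioo
        ⟨by nlinarith [Real.pi_gt_three], by nlinarith [Real.pi_gt_three]⟩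
      have h1 : 0 < a * Real.cos a := mul_pos ha0 hca
      have h2 : 0 ≤ c * Real.sin a := mul_nonneg h hsa.le
      simp only [hg]
      linarith
    · have hcos := Real.one_sub_sq_div_two_le_cos (x := a)
      have hsin : Real.sin a ≤ a := Real.sin_le ha0.le
      have ha2 : a ^ 2 ≤ 1 + c := by
        have h3 : a ≤ Real.sqrt (1 + c) := min_le_left _ _
        nlinarith [Real.sq_sqrt (show (0:ℝ) ≤ 1 + c by linarith), Real.sqrt_nonneg (1 + c)]
      have h1 : c * Real.sin a ≥ c * a := by nlinarith
      have h2 : a * Real.cos a ≥ a * (1 - a ^ 2 / 2) :=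
        mul_le_mul_of_nonneg_left hcos ha0.le
      have h3 : a * (a ^ 2) ≤ a * (1 + c) := mul_le_mul_of_nonneg_left ha2 ha0.le
      have h4 : 0 < a * (1 + c) := mul_pos ha0 (by linarith)
      simp only [hg]
      nlinarith
  have hgπ : g Real.pi < 0 := by
    show Real.pi * Real.cos Real.pi + c * Real.sin Real.pi < 0
    rw [Real.cos_pi, Real.sin_pi]
    have := Real.pi_pos
    nlinarith
  obtain ⟨ν, hν, hgν⟩ := intermediate_value_Ioo' haπ.le hgcont.continuousOn ⟨hgπ, hga⟩
  refine ⟨ν, ⟨ha0.trans hν.1, hν.2⟩, ?_⟩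
  have h5 : ν * Real.cos ν + c * Real.sin ν = 0 := hgν
  linarith

lemma exists_eta (c : ℝ) (hc : c < -1) :
    ∃ η : ℝ, 0 < η ∧ c * Real.sinh η = -(η * Real.cosh η) := by
  set g : ℝ → ℝ := fun η => η * Real.cosh η + c * Real.sinh η with hg
  have hgcont : Continuous g :=
    (continuous_id.mul Real.continuous_cosh).add (continuous_const.mul Real.continuous_sinh)
  have h1c : (1:ℝ) < -c := by linarith
  have hev : ∀ᶠ y in nhds (0:ℝ), Real.cosh y < -c := by
    have h := Real.continuous_cosh.continuousAt (x := (0:ℝ))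
    rw [ContinuousAt, Real.cosh_zero] at h
    exact h.eventually_lt_const h1c
  obtain ⟨δ, hδ0, hδ⟩ := Metric.eventually_nhds_iff.1 hev
  set a : ℝ := min (δ / 2) 1 with hadef
  have ha0 : 0 < a := lt_min (by linarith) zero_lt_one
  have hacosh : Real.cosh a < -c := by
    apply hδ
    rw [Real.dist_eq, sub_zero, abs_of_pos ha0]
    calc a ≤ δ / 2 := min_le_left _ _
      _ < δ := by linarith
  have hga : g a < 0 := by
    have hsa : a ≤ Real.sinh a := Real.self_le_sinh_iff.2 ha0.le
    have h2 : c * Real.sinh a ≤ c * a := by nlinarith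
    have h3 : a * Real.cosh a < a * (-c) := mul_lt_mul_of_pos_left hacosh ha0
    simp only [hg]
    nlinarith
  set b : ℝ := 1 - c with hb
  have hgb : 0 < g b := by
    have h3 : Real.sinh b ≤ Real.cosh b := (Real.sinh_lt_cosh b).le
    have h4 : (1:ℝ) ≤ Real.cosh b := Real.one_le_cosh b
    have h5 : c * Real.sinh b ≥ c * Real.cosh b := by nlinarith
    simp only [hg]
    nlinarith
  have hab : a ≤ b := by
    have h6 : a ≤ 1 := min_le_right _ _
    simp only [hb]
    linarith
  obtain ⟨η, hη, hgη⟩ := intermediate_value_Ioo hab hgcont.continuousOn ⟨hga, hgb⟩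
  refine ⟨η, ha0.trans hη.1, ?_⟩
  have h7 : η * Real.cosh η + c * Real.sinh η = 0 := hgη
  linarith

lemma sqrt_form_trig (c ν : ℝ) (hν : ν ∈ Set.Ioo 0 Real.pi)
    (hrel : c * Real.sin ν = -(ν * Real.cos ν)) :
    Real.sin ν / ν = 1 / Real.sqrt (c ^ 2 + ν ^ 2) := by
  have hsν : 0 < Real.sin ν := Real.sin_pos_of_pos_of_lt_pi hν.1 hν.2
  have hν0 := hν.1
  have hpyth := Real.sin_sq_add_cos_sq ν
  have hsq : c ^ 2 + ν ^ 2 = (ν / Real.sin ν) ^ 2 := by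
    field_simp
    linear_combination (c * Real.sin ν - ν * Real.cos ν) * hrel + ν ^ 2 * hpyth
  rw [hsq, Real.sqrt_sq (by positivity), one_div_div]

lemma sqrt_form_hyp (c η : ℝ) (hη0 : 0 < η)
    (hrel : c * Real.sinh η = -(η * Real.cosh η)) :
    Real.sinh η / η = 1 / Real.sqrt (c ^ 2 - η ^ 2) := by
  have hsh : 0 < Real.sinh η := by positivity
  have hpyth := Real.cosh_sq_sub_sinh_sq η
  have hsq : c ^ 2 - η ^ 2 = (η / Real.sinh η) ^ 2 := by
    field_simp
    linear_combination (c * Real.sinh η - η * Real.cosh η) * hrel + η ^ 2 * hpyth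
  rw [hsq, Real.sqrt_sq (by positivity), one_div_div]

end Helpers

theorem statement12 (R : ℂ → (Lp ℂ 2 mu01 →L[ℂ] Lp ℂ 2 mu01))
    (hR : IsResolventFamily R) :
    (∀ z z' : ℂ, z.re = z'.re → ‖R z‖ = ‖R z'‖) ∧
    (∀ z : ℂ, -1 < z.re → ∀ ν : ℝ, ν ∈ Ioo 0 Real.pi →
      -(ν * (Real.cos ν / Real.sin ν)) = z.re →
      ‖R z‖ = Real.sin ν / ν ∧ ‖R z‖ = 1 / Real.sqrt (z.re ^ 2 + ν ^ 2)) ∧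
    (∀ z : ℂ, z.re = -1 → ‖R z‖ = 1) ∧
    (∀ z : ℂ, z.re < -1 → ∀ η : ℝ, 0 < η →
      -(η * (Real.cosh η / Real.sinh η)) = z.re →
      ‖R z‖ = Real.sinh η / η ∧ ‖R z‖ = 1 / Real.sqrt (z.re ^ 2 - η ^ 2)) := by
  constructor
  · intro z z' hzz
    rcases lt_trichotomy z.re (-1) with h | h | h
    · obtain ⟨η, hη0, hrel⟩ := exists_eta z.re h
      rw [norm_hyp R hR z η hη0 hrel, norm_hyp R hR z' η hη0 (by rw [← hzz]; exact hrel)]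
    · rw [norm_one_case R hR z h, norm_one_case R hR z' (by rw [← hzz]; exact h)]
    · obtain ⟨ν, hν, hrel⟩ := exists_nu z.re h
      rw [norm_trig R hR z ν hν hrel, norm_trig R hR z' ν hν (by rw [← hzz]; exact hrel)]
  refine ⟨?_, ?_, ?_⟩
  · intro z _ ν hν hrel'
    have hsν : 0 < Real.sin ν := Real.sin_pos_of_pos_of_lt_pi hν.1 hν.2
    have hrel : z.re * Real.sin ν = -(ν * Real.cos ν) := by
      have h2 := congrArg (fun t => t * Real.sin ν) hrel'
      rw [neg_mul, mul_assoc, div_mul_cancel₀ _ hsν.ne'] at h2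
      linarith
    refine ⟨norm_trig R hR z ν hν hrel, ?_⟩
    rw [norm_trig R hR z ν hν hrel]
    exact sqrt_form_trig z.re ν hν hrel
  · intro z hz
    exact norm_one_case R hR z hz
  · intro z _ η hη0 hrel'
    have hsh : 0 < Real.sinh η := by positivity
    have hrel : z.re * Real.sinh η = -(η * Real.cosh η) := by
      have h2 := congrArg (fun t => t * Real.sinh η) hrel'
      rw [neg_mul, mul_assoc, div_mul_cancel₀ _ hsh.ne'] at h2
      linarith
    refine ⟨norm_hyp R hR z η hη0 hrel, ?_⟩
    rw [norm_hyp R hR z η hη0 hrel]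
    exact sqrt_form_hyp z.re η hη0 hrel
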